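/- Let p ∈ (1,∞). There exists a constant c(p) ≥ 1 such that for every Q > 1 and every ε > 0 there is a weight w on ℝ taking only 2 values (i.e., there exist real numbers 0 < a < b with w(x) ∈ {a, b} for a.e. x ∈ ℝ) such that Q ≤ [w]_{A_p} ≤ c(p)·Q and the doubling constants of w and of σ := w^{−1/(p−1)} satisfy D_w ≤ 2+ε and D_σ ≤ 2+ε. -/

import Mathlib

open MeasureTheory Set Filter Topology


/-- Average of `w` over the interval `[a, b)`. -/
noncomputable def avgOn (w : ℝ → ℝ) (a b : ℝ) : ℝ :=
  (b - a)⁻¹ * ∫ x in Set.Ico a b, w x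

/-- A weight on `ℝ`: measurable, locally integrable, a.e. positive. -/
def IsWeight (w : ℝ → ℝ) : Prop :=
  Measurable w ∧ MeasureTheory.LocallyIntegrable w ∧ ∀ᵐ x ∂(volume : Measure ℝ), 0 < w x

/-- The set of values `⟨w⟩_I ⟨σ⟩_I^{p-1}` over all bounded intervals `I`;
its supremum is the Muckenhoupt `A_p` characteristic `[w, σ]_{A_p}`. -/
noncomputable def apSet (p : ℝ) (w σ : ℝ → ℝ) : Set ℝ :=
  {c | ∃ a b : ℝ, a < b ∧ c = avgOn w a b * (avgOn σ a b) ^ (p - 1)}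

/-- The doubling constant of `w` is at most `D`. -/
def DoublingLE (w : ℝ → ℝ) (D : ℝ) : Prop :=
  ∀ a b : ℝ, a < b →
    (∫ x in Set.Ico (a - (b - a) / 2) (b + (b - a) / 2), w x) ≤ D * ∫ x in Set.Ico a b, w x

namespace S4


def wstep (K : ℕ) (P : ℕ) (i : ℤ) : ℕ :=
  if P = 0 then 0 else if 1 ≤ i ∧ i ≤ (K : ℤ) + 1 then P + 1 else P - 1

def Y (K y₀ : ℕ) : ℕ → ℤ → ℕ
  | 0, _ => y₀
  | n + 1, j => wstep K (Y K y₀ n (j / (2 * K : ℤ))) (j % (2 * K : ℤ))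

variable {K y₀ : ℕ}

lemma Y_succ (n : ℕ) (j : ℤ) :
    Y K y₀ (n+1) j = wstep K (Y K y₀ n (j / (2 * K : ℤ))) (j % (2 * K : ℤ)) := rfl

lemma wstep_zero (K : ℕ) (i : ℤ) : wstep K 0 i = 0 := by simp [wstep]

lemma wstep_down {K : ℕ} {i : ℤ} (h : ¬ (1 ≤ i ∧ i ≤ (K : ℤ) + 1)) (P : ℕ) :
    wstep K P i = P - 1 := by
  rcases Nat.eq_zero_or_pos P with h0 | h0
  · simp [wstep, h0]
  · simp [wstep, h0.ne', h]

lemma wstep_up {K : ℕ} {i : ℤ} (h : 1 ≤ i ∧ i ≤ (K : ℤ) + 1) {P : ℕ} (hP : P ≠ 0) :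
    wstep K P i = P + 1 := by simp [wstep, h, hP]

lemma wstep_le (K : ℕ) (P : ℕ) (i : ℤ) : wstep K P i ≤ P + 1 := by
  unfold wstep
  by_cases h0 : P = 0
  · simp [h0]
  · by_cases h1 : 1 ≤ i ∧ i ≤ (K : ℤ) + 1 <;> simp [h0, h1] <;> omega

lemma wstep_ge (K : ℕ) (P : ℕ) (i : ℤ) : P - 1 ≤ wstep K P i := by
  unfold wstep
  by_cases h0 : P = 0
  · simp [h0]
  · by_cases h1 : 1 ≤ i ∧ i ≤ (K : ℤ) + 1 <;> simp [h0, h1] <;> omega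

lemma hK3_down_top {K : ℕ} (hK : 3 ≤ K) :
    ¬ ((1:ℤ) ≤ (2*(K:ℤ) - 1) ∧ (2*(K:ℤ) - 1) ≤ (K:ℤ) + 1) := by
  push_neg; intro _; omega

lemma hK3_down_bot (K : ℕ) : ¬ ((1:ℤ) ≤ (0:ℤ) ∧ (0:ℤ) ≤ (K:ℤ) + 1) := by
  push_neg; intro h; omega

lemma succ_div_mod {Mz : ℤ} (hM : 0 < Mz) {j : ℤ} (h : j % Mz < Mz - 1) :
    (j + 1) / Mz = j / Mz ∧ (j + 1) % Mz = j % Mz + 1 := by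
  have h0 : 0 ≤ j % Mz := Int.emod_nonneg j (by omega)
  have hdm : Mz * (j / Mz) + j % Mz = j := Int.mul_ediv_add_emod j Mz
  constructor
  · have e : (j + 1) = (j % Mz + 1) + Mz * (j / Mz) := by linarith
    rw [e, Int.add_mul_ediv_left _ _ (by omega : Mz ≠ 0),
      Int.ediv_eq_zero_of_lt (by omega) (by omega)]
    ring
  · have e : (j + 1) = (j % Mz + 1) + (j / Mz) * Mz := by linarith
    rw [e, Int.add_mul_emod_self_right, Int.emod_eq_of_lt (by omega) (by omega)]

lemma succ_div_mod_top {Mz : ℤ} (hM : 0 < Mz) {j : ℤ} (h : j % Mz = Mz - 1) :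
    (j + 1) / Mz = j / Mz + 1 ∧ (j + 1) % Mz = 0 := by
  have hdm : Mz * (j / Mz) + j % Mz = j := Int.mul_ediv_add_emod j Mz
  have hj1 : j + 1 = (j / Mz + 1) * Mz := by rw [add_mul, one_mul]; linarith
  constructor
  · rw [hj1, Int.mul_ediv_cancel _ (by omega)]
  · rw [hj1, Int.mul_emod_left]

lemma div_mul_add {Mz : ℤ} (hM : 0 < Mz) (j : ℤ) {i : ℤ} (h0 : 0 ≤ i) (h1 : i < Mz) :
    (Mz * j + i) / Mz = j ∧ (Mz * j + i) % Mz = i := by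
  constructor
  · rw [add_comm, Int.add_mul_ediv_left _ _ (by omega : Mz ≠ 0),
      Int.ediv_eq_zero_of_lt h0 h1]
    ring
  · rw [add_comm, mul_comm, Int.add_mul_emod_self_right, Int.emod_eq_of_lt h0 h1]

/-- Adjacent cells at the same generation have walk values within 2. -/
lemma Y_adj (hK : 3 ≤ K) : ∀ n (j : ℤ),
    (Y K y₀ n (j+1) : ℤ) ≤ Y K y₀ n j + 2 ∧ (Y K y₀ n j : ℤ) ≤ Y K y₀ n (j+1) + 2 := by
  intro n
  induction n with
  | zero => intro j; simp [Y]
  | succ n ih =>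
    intro j
    have hM : (0:ℤ) < 2 * K := by positivity
    have hmod0 : 0 ≤ j % (2*K : ℤ) := Int.emod_nonneg j (by omega)
    have hmod1 : j % (2*K : ℤ) < 2*K := Int.emod_lt_of_pos j hM
    rw [Y_succ, Y_succ]
    rcases lt_or_ge (j % (2*K : ℤ)) (2*K - 1 : ℤ) with hc | hc
    · obtain ⟨hd, hm⟩ := succ_div_mod hM hc
      rw [hd, hm]
      set P := Y K y₀ n (j / (2*K:ℤ))
      have l1 := wstep_le K P (j % (2*K:ℤ) + 1)
      have l2 := wstep_ge K P (j % (2*K:ℤ) + 1)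
      have l3 := wstep_le K P (j % (2*K:ℤ))
      have l4 := wstep_ge K P (j % (2*K:ℤ))
      omega
    · have hc' : j % (2*K:ℤ) = 2*K - 1 := by omega
      obtain ⟨hd, hm⟩ := succ_div_mod_top hM hc'
      rw [hd, hm, hc']
      have e1 : wstep K (Y K y₀ n (j / (2*K:ℤ))) (2*(K:ℤ) - 1) = Y K y₀ n (j / (2*K:ℤ)) - 1 :=
        wstep_down (hK3_down_top hK) _
      have e2 : wstep K (Y K y₀ n (j / (2*K:ℤ) + 1)) 0 = Y K y₀ n (j / (2*K:ℤ) + 1) - 1 :=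
        wstep_down (hK3_down_bot K) _
      rw [show (2*(K:ℤ) - 1) = 2*(K:ℤ) - 1 from rfl] at *
      rw [e1, e2]
      have := ih (j / (2*K:ℤ))
      omega

/-- Walk values at distance `d` differ by at most `2d`. -/
lemma Y_chain (hK : 3 ≤ K) (n : ℕ) (j : ℤ) : ∀ d : ℕ,
    (Y K y₀ n (j + d) : ℤ) ≤ Y K y₀ n j + 2 * d ∧
      (Y K y₀ n j : ℤ) ≤ Y K y₀ n (j + d) + 2 * d := by
  intro d
  induction d with
  | zero => simp
  | succ d ih =>
    have h := Y_adj (y₀ := y₀) hK n (j + d)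
    have e : (j + ((d : ℤ) + 1)) = (j + d) + 1 := by ring
    have e2 : ((d + 1 : ℕ) : ℤ) = (d : ℤ) + 1 := by push_cast; ring
    rw [e2, e]
    omega

/-- Child value is within 1 of parent value. -/
lemma Y_child (n : ℕ) (j : ℤ) :
    (Y K y₀ (n+1) j : ℤ) ≤ Y K y₀ n (j / (2*K:ℤ)) + 1 ∧
    (Y K y₀ n (j / (2*K:ℤ)) : ℤ) ≤ Y K y₀ (n+1) j + 1 := by
  rw [Y_succ]
  set P := Y K y₀ n (j / (2*K:ℤ))
  have l1 := wstep_le K P (j % (2*K:ℤ))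
  have l2 := wstep_ge K P (j % (2*K:ℤ))
  omega

lemma Y_zero_absorbed (n : ℕ) (j : ℤ) (h : Y K y₀ n (j / (2*K:ℤ)) = 0) :
    Y K y₀ (n+1) j = 0 := by
  rw [Y_succ, h, wstep_zero]




/-- real scale factor -/
noncomputable abbrev Mr (K : ℕ) : ℝ := (2*K : ℕ)

lemma Mr_pos (hK : 1 ≤ K) : (0:ℝ) < Mr K := by
  simp only [Mr]; positivity

def cell (K : ℕ) (n : ℕ) (j : ℤ) : Set ℝ :=
  Ico ((j : ℝ) / (Mr K)^n) (((j : ℝ) + 1) / (Mr K)^n)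

lemma floor_div_nat_int (y : ℝ) {m : ℕ} (hm : 0 < m) : ⌊y / m⌋ = ⌊y⌋ / (m:ℤ) := by
  have hm' : (0:ℝ) < m := by positivity
  have hdm : (m:ℤ) * (⌊y⌋ / (m:ℤ)) + ⌊y⌋ % (m:ℤ) = ⌊y⌋ := Int.mul_ediv_add_emod _ _
  have h0 : 0 ≤ ⌊y⌋ % (m:ℤ) := Int.emod_nonneg _ (by exact_mod_cast hm.ne')
  have h1 : ⌊y⌋ % (m:ℤ) < m := Int.emod_lt_of_pos _ (by exact_mod_cast hm)
  have key1 : (m:ℤ) * (⌊y⌋ / (m:ℤ)) ≤ ⌊y⌋ := by linarith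
  have expand : ((⌊y⌋ / (m:ℤ)) + 1) * (m:ℤ) = (m:ℤ) * (⌊y⌋ / (m:ℤ)) + m := by ring
  have key2 : (⌊y⌋ : ℤ) + 1 ≤ ((⌊y⌋ / (m:ℤ)) + 1) * (m:ℤ) := by linarith
  rw [Int.floor_eq_iff]
  constructor
  · rw [le_div_iff₀ hm']
    calc ((⌊y⌋ / (m:ℤ) : ℤ) : ℝ) * m = ((m:ℤ) * (⌊y⌋ / (m:ℤ)) : ℤ) := by push_cast; ring
    _ ≤ (⌊y⌋ : ℝ) := by exact_mod_cast key1
    _ ≤ y := Int.floor_le y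
  · rw [div_lt_iff₀ hm']
    have hf : y < ⌊y⌋ + 1 := Int.lt_floor_add_one y
    have : ((⌊y⌋:ℤ) + 1 : ℝ) ≤ (((⌊y⌋ / (m:ℤ)) + 1 : ℤ) : ℝ) * (m:ℝ) := by
      have := key2
      push_cast
      exact_mod_cast key2
    push_cast at this
    linarith

lemma mem_cell_iff (hK : 1 ≤ K) {x : ℝ} {n : ℕ} {j : ℤ} :
    x ∈ cell K n j ↔ ⌊x * (Mr K)^n⌋ = j := by
  have hMn : (0:ℝ) < (Mr K)^n := pow_pos (Mr_pos hK) n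
  rw [cell, mem_Ico, Int.floor_eq_iff, div_le_iff₀ hMn, lt_div_iff₀ hMn]

lemma floor_scale (hK : 1 ≤ K) (x : ℝ) (n : ℕ) :
    ⌊x * (Mr K)^n⌋ = ⌊x * (Mr K)^(n+1)⌋ / (2*K : ℤ) := by
  have h2K : 0 < 2*K := by omega
  have : x * (Mr K)^n = (x * (Mr K)^(n+1)) / (2*K : ℕ) := by
    rw [pow_succ]
    field_simp [Mr]
  rw [this, floor_div_nat_int _ h2K]
  norm_cast

def Aset (K y₀ : ℕ) (n : ℕ) : Set ℝ := {x | Y K y₀ n ⌊x * (Mr K)^n⌋ ≠ 0}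

def Bset (K y₀ : ℕ) : Set ℝ := ⋂ n, Aset K y₀ n

lemma Aset_eq_union (hK : 1 ≤ K) (n : ℕ) :
    Aset K y₀ n = ⋃ (j : ℤ), ⋃ (_ : Y K y₀ n j ≠ 0), cell K n j := by
  ext x
  simp only [Aset, mem_setOf_eq, mem_iUnion]
  constructor
  · intro h
    exact ⟨⌊x * (Mr K)^n⌋, h, (mem_cell_iff hK).2 rfl⟩
  · rintro ⟨j, hj, hx⟩
    rwa [(mem_cell_iff hK).1 hx]

lemma measurableSet_cell (K n : ℕ) (j : ℤ) : MeasurableSet (cell K n j) :=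
  measurableSet_Ico

lemma measurableSet_Aset (hK : 1 ≤ K) (n : ℕ) : MeasurableSet (Aset K y₀ n) := by
  rw [Aset_eq_union hK]
  exact MeasurableSet.iUnion fun j => MeasurableSet.iUnion fun _ => measurableSet_cell K n j

lemma measurableSet_Bset (hK : 1 ≤ K) : MeasurableSet (Bset K y₀) :=
  MeasurableSet.iInter fun n => measurableSet_Aset hK n

lemma Aset_succ_subset (hK : 1 ≤ K) (n : ℕ) : Aset K y₀ (n+1) ⊆ Aset K y₀ n := by
  intro x hx
  simp only [Aset, mem_setOf_eq] at hx ⊢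
  intro h0
  exact hx (Y_zero_absorbed _ _ (by rwa [← floor_scale hK]))

lemma Aset_antitone (hK : 1 ≤ K) : Antitone (fun n => Aset K y₀ n) := by
  apply antitone_nat_of_succ_le
  intro n
  exact Aset_succ_subset hK n

lemma vol_cell (hK : 1 ≤ K) (n : ℕ) (j : ℤ) :
    volume (cell K n j) = ENNReal.ofReal (((Mr K)^n)⁻¹) := by
  have hMn : (0:ℝ) < (Mr K)^n := pow_pos (Mr_pos hK) n
  rw [cell, Real.volume_Ico]
  congr 1
  field_simp
  ring

lemma cell_children (hK : 1 ≤ K) (n : ℕ) (j : ℤ) :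
    cell K n j = ⋃ i ∈ Finset.range (2*K), cell K (n+1) ((2*K : ℤ) * j + i) := by
  have h2K : (0:ℤ) < 2*K := by exact_mod_cast (by omega : 0 < 2*K)
  ext x
  simp only [mem_iUnion, Finset.mem_range]
  rw [mem_cell_iff hK]
  constructor
  · intro h
    set q := ⌊x * (Mr K)^(n+1)⌋ with hq
    have hdiv : q / (2*K : ℤ) = j := by rw [← floor_scale hK] at *; exact h
    have h0 : 0 ≤ q % (2*K:ℤ) := Int.emod_nonneg _ (by omega)
    have h1 : q % (2*K:ℤ) < 2*K := Int.emod_lt_of_pos _ h2K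
    refine ⟨(q % (2*K:ℤ)).toNat, ?_, ?_⟩
    · omega
    · rw [mem_cell_iff hK]
      have htn : ((q % (2*K:ℤ)).toNat : ℤ) = q % (2*K:ℤ) := Int.toNat_of_nonneg h0
      rw [htn, ← hdiv]
      linarith [Int.mul_ediv_add_emod q (2*K:ℤ)]
  · rintro ⟨i, hi, hx⟩
    rw [mem_cell_iff hK] at hx
    rw [floor_scale hK, hx]
    have h0 : (0:ℤ) ≤ (i:ℤ) := by positivity
    have h1 : (i:ℤ) < 2*K := by exact_mod_cast hi
    rw [add_comm, Int.add_mul_ediv_left _ _ (by omega : (2*K:ℤ) ≠ 0),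
      Int.ediv_eq_zero_of_lt h0 h1]
    ring

lemma cell_disjoint (hK : 1 ≤ K) (n : ℕ) {j j' : ℤ} (h : j ≠ j') :
    Disjoint (cell K n j) (cell K n j') := by
  rw [Set.disjoint_left]
  intro x hx hx'
  rw [mem_cell_iff hK] at hx hx'
  exact h (hx ▸ hx')



/-! ### Martingale constants -/

noncomputable def rho (K : ℕ) : ℝ := ((K:ℝ) - 1)/((K:ℝ) + 1)
noncomputable def zeta (K : ℕ) : ℝ := (1 + rho K)/2
noncomputable def cc (K : ℕ) : ℝ :=
  (((K:ℝ)+1) * (zeta K)^2 + ((K:ℝ)-1)) / (2*(K:ℝ)*(zeta K))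

lemma K_real (hK : 3 ≤ K) : (3:ℝ) ≤ (K:ℝ) := by exact_mod_cast hK

lemma rho_nonneg (hK : 3 ≤ K) : 0 ≤ rho K := by
  have h := K_real hK
  rw [rho]
  apply div_nonneg <;> linarith

lemma rho_lt_one (hK : 3 ≤ K) : rho K < 1 := by
  have h := K_real hK
  rw [rho, div_lt_one (by linarith)]
  linarith

lemma rho_ge_half (hK : 3 ≤ K) : 1/2 ≤ rho K := by
  have h := K_real hK
  rw [rho, le_div_iff₀ (by linarith)]
  linarith

lemma one_sub_rho (hK : 3 ≤ K) : 1 - rho K = 2 / ((K:ℝ)+1) := by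
  have h := K_real hK
  rw [rho]
  field_simp
  norm_num

lemma zeta_lt_one (hK : 3 ≤ K) : zeta K < 1 := by
  have := rho_lt_one hK; rw [zeta]; linarith

lemma zeta_pos (hK : 3 ≤ K) : 0 < zeta K := by
  have := rho_nonneg hK; rw [zeta]; linarith

lemma rho_lt_zeta (hK : 3 ≤ K) : rho K < zeta K := by
  have := rho_lt_one hK; rw [zeta]; linarith

lemma cc_pos (hK : 3 ≤ K) : 0 < cc K := by
  have h := K_real hK
  have hz := zeta_pos hK
  rw [cc]
  apply div_pos
  · nlinarith
  · nlinarith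

lemma cc_lt_one (hK : 3 ≤ K) : cc K < 1 := by
  have h := K_real hK
  have hz := zeta_pos hK
  have h1 := zeta_lt_one hK
  have h2 := rho_lt_zeta hK
  rw [cc, div_lt_one (by nlinarith)]
  have key : ((K:ℝ)+1) * (zeta K)^2 - 2*(K:ℝ)*(zeta K) + ((K:ℝ)-1)
      = ((K:ℝ)+1) * (zeta K - 1) * (zeta K - rho K) := by
    rw [rho]; field_simp; ring
  nlinarith [key]

lemma rho_quad (hK : 3 ≤ K) : ((K:ℝ)+1) * (rho K)^2 + ((K:ℝ)-1) = 2*(K:ℝ)*(rho K) := by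
  have h := K_real hK
  rw [rho]
  field_simp
  ring

lemma zeta_quad (hK : 3 ≤ K) :
    ((K:ℝ)+1) * (zeta K)^2 + ((K:ℝ)-1) = 2*(K:ℝ) * cc K * (zeta K) := by
  have hz := (zeta_pos hK).ne'
  have h := K_real hK
  rw [cc]
  field_simp

/-- Count of "up" indices. -/
lemma card_up (hK : 3 ≤ K) :
    (Finset.filter (fun i : ℕ => 1 ≤ (i:ℤ) ∧ (i:ℤ) ≤ (K:ℤ) + 1) (Finset.range (2*K))).card
      = K + 1 := by
  have : Finset.filter (fun i : ℕ => 1 ≤ (i:ℤ) ∧ (i:ℤ) ≤ (K:ℤ) + 1) (Finset.range (2*K))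
      = Finset.Icc 1 (K+1) := by
    ext i
    simp only [Finset.mem_filter, Finset.mem_range, Finset.mem_Icc]
    omega
  rw [this, Nat.card_Icc]
  omega

/-- Key sum identity: for a sequence `g : ℕ → ℝ`, summing `g (wstep K P i)` over children. -/
lemma sum_wstep (hK : 3 ≤ K) (P : ℕ) (hP : P ≠ 0) (g : ℕ → ℝ) :
    ∑ i ∈ Finset.range (2*K), g (wstep K P (i:ℤ))
      = ((K:ℝ)+1) * g (P+1) + ((K:ℝ)-1) * g (P-1) := by
  have step_eq : ∀ i ∈ Finset.range (2*K),
      g (wstep K P (i:ℤ)) = if 1 ≤ (i:ℤ) ∧ (i:ℤ) ≤ (K:ℤ) + 1 then g (P+1) else g (P-1) := by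
    intro i _
    by_cases h : 1 ≤ (i:ℤ) ∧ (i:ℤ) ≤ (K:ℤ) + 1
    · rw [if_pos h, wstep_up h hP]
    · rw [if_neg h, wstep_down h]
  rw [Finset.sum_congr rfl step_eq, Finset.sum_ite]
  have hcard := card_up hK
  rw [Finset.sum_const, Finset.sum_const, hcard, Finset.filter_not,
    Finset.card_sdiff_of_subset (Finset.filter_subset _ _), hcard, Finset.card_range]
  have h2 : 2*K - (K+1) = K - 1 := by omega
  rw [h2]
  have hK1 : ((K - 1 : ℕ) : ℝ) = (K:ℝ) - 1 := by
    have : (1:ℕ) ≤ K := by omega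
    push_cast [this]
    ring
  have hK2 : ((K + 1 : ℕ) : ℝ) = (K:ℝ) + 1 := by push_cast; ring
  rw [nsmul_eq_mul, nsmul_eq_mul, hK1, hK2]

lemma sum_rho_pow (hK : 3 ≤ K) (P : ℕ) :
    ∑ i ∈ Finset.range (2*K), (rho K)^(wstep K P (i:ℤ)) = 2*(K:ℝ) * (rho K)^P := by
  rcases Nat.eq_zero_or_pos P with h0 | h0
  · subst h0
    have : ∀ i ∈ Finset.range (2*K), (rho K)^(wstep K 0 (i:ℤ)) = 1 := by
      intro i _; rw [wstep_zero]; norm_num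
    rw [Finset.sum_congr rfl this, Finset.sum_const, Finset.card_range, nsmul_eq_mul]
    push_cast; ring
  · have hP : P ≠ 0 := h0.ne'
    rw [sum_wstep hK P hP]
    have hPP : P - 1 + 1 = P := by omega
    have e1 : (rho K)^(P+1) = (rho K)^(P-1) * (rho K)^2 := by
      rw [← pow_add]; congr 1; omega
    have e2 : (rho K)^P = (rho K)^(P-1) * (rho K) := by
      rw [← pow_succ]; congr 1; omega
    rw [e1, e2]
    have := rho_quad hK
    linear_combination ((rho K)^(P-1)) * this

lemma sum_zeta_pow (hK : 3 ≤ K) {P : ℕ} (hP : P ≠ 0) :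
    ∑ i ∈ Finset.range (2*K), (zeta K)^(wstep K P (i:ℤ))
      = 2*(K:ℝ) * cc K * (zeta K)^P := by
  rw [sum_wstep hK P hP]
  have e1 : (zeta K)^(P+1) = (zeta K)^(P-1) * (zeta K)^2 := by
    rw [← pow_add]; congr 1; omega
  have e2 : (zeta K)^P = (zeta K)^(P-1) * (zeta K) := by
    rw [← pow_succ]; congr 1; omega
  rw [e1, e2]
  have := zeta_quad hK
  linear_combination ((zeta K)^(P-1)) * this

/-! ### Measures of cells -/

noncomputable def nu (K y₀ m n : ℕ) (j : ℤ) : ℝ :=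
  (volume (Aset K y₀ m ∩ cell K n j)).toReal

lemma vol_inter_cell_ne_top (hK : 1 ≤ K) (S : Set ℝ) (n : ℕ) (j : ℤ) :
    volume (S ∩ cell K n j) ≠ ⊤ := by
  apply ne_top_of_le_ne_top _ (measure_mono (inter_subset_right))
  rw [vol_cell hK]
  exact ENNReal.ofReal_ne_top

lemma nu_nonneg (K y₀ m n : ℕ) (j : ℤ) : 0 ≤ nu K y₀ m n j := ENNReal.toReal_nonneg

lemma nu_le (hK : 1 ≤ K) (y₀ m n : ℕ) (j : ℤ) : nu K y₀ m n j ≤ ((Mr K)^n)⁻¹ := by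
  have h1 : volume (Aset K y₀ m ∩ cell K n j) ≤ volume (cell K n j) :=
    measure_mono inter_subset_right
  rw [vol_cell hK] at h1
  have := ENNReal.toReal_mono ENNReal.ofReal_ne_top h1
  rw [ENNReal.toReal_ofReal (by positivity)] at this
  exact this

lemma nu_base (hK : 1 ≤ K) (y₀ n : ℕ) (j : ℤ) :
    nu K y₀ n n j = if Y K y₀ n j = 0 then 0 else ((Mr K)^n)⁻¹ := by
  by_cases h : Y K y₀ n j = 0
  · rw [if_pos h]
    have : Aset K y₀ n ∩ cell K n j = ∅ := by
      ext x
      simp only [mem_inter_iff, mem_empty_iff_false, iff_false, not_and, Aset, mem_setOf_eq]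
      intro hx hc
      rw [(mem_cell_iff hK).1 hc] at hx
      exact hx h
    rw [nu, this]
    simp
  · rw [if_neg h]
    have : Aset K y₀ n ∩ cell K n j = cell K n j := by
      apply inter_eq_self_of_subset_right
      intro x hx
      simp only [Aset, mem_setOf_eq]
      rw [(mem_cell_iff hK).1 hx]
      exact h
    rw [nu, this, vol_cell hK, ENNReal.toReal_ofReal (by positivity)]

lemma nu_children (hK : 1 ≤ K) (y₀ m n : ℕ) (j : ℤ) :
    nu K y₀ m n j = ∑ i ∈ Finset.range (2*K), nu K y₀ m (n+1) ((2*K:ℤ) * j + i) := by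
  have hdisj : (↑(Finset.range (2*K)) : Set ℕ).PairwiseDisjoint
      (fun i : ℕ => Aset K y₀ m ∩ cell K (n+1) ((2*K:ℤ) * j + i)) := by
    intro a _ b _ hab
    apply Disjoint.inter_left'
    apply Disjoint.inter_right'
    apply cell_disjoint hK
    intro hc
    apply hab
    have : (a:ℤ) = b := by omega
    exact_mod_cast this
  have hmeas : ∀ b ∈ Finset.range (2*K),
      MeasurableSet (Aset K y₀ m ∩ cell K (n+1) ((2*K:ℤ) * j + b)) := fun b _ =>
    (measurableSet_Aset hK m).inter (measurableSet_cell K (n+1) _)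
  have hsplit : Aset K y₀ m ∩ cell K n j
      = ⋃ i ∈ Finset.range (2*K), (Aset K y₀ m ∩ cell K (n+1) ((2*K:ℤ) * j + i)) := by
    rw [cell_children hK n j]
    ext x
    simp only [mem_inter_iff, mem_iUnion, Finset.mem_range]
    tauto
  rw [nu, hsplit, measure_biUnion_finset hdisj hmeas, ENNReal.toReal_sum]
  · rfl
  · intro i _
    exact vol_inter_cell_ne_top hK _ _ _

lemma Y_child_eq (hK : 1 ≤ K) (y₀ n : ℕ) (j : ℤ) {i : ℕ} (hi : i < 2*K) :
    Y K y₀ (n+1) ((2*K:ℤ) * j + i) = wstep K (Y K y₀ n j) (i : ℤ) := by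
  have h2K : (0:ℤ) < 2*K := by exact_mod_cast (by omega : 0 < 2*K)
  obtain ⟨hd, hm⟩ := div_mul_add h2K j (by positivity : (0:ℤ) ≤ (i:ℤ))
    (by exact_mod_cast hi)
  rw [Y_succ, hd, hm]

lemma nu_absorbed (hK : 1 ≤ K) (y₀ : ℕ) {n : ℕ} {j : ℤ} (h : Y K y₀ n j = 0)
    (d : ℕ) : nu K y₀ (n+d) n j = 0 := by
  have hsub : Aset K y₀ (n+d) ⊆ Aset K y₀ n := Aset_antitone hK (by omega)
  have : Aset K y₀ (n+d) ∩ cell K n j = ∅ := by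
    ext x
    simp only [mem_inter_iff, mem_empty_iff_false, iff_false, not_and]
    intro hx hc
    have hx' := hsub hx
    simp only [Aset, mem_setOf_eq] at hx'
    rw [(mem_cell_iff hK).1 hc] at hx'
    exact hx' h
  rw [nu, this]
  simp

lemma Mn_succ_inv (hK1 : 1 ≤ K) (n : ℕ) :
    ((Mr K)^(n+1))⁻¹ = ((Mr K)^n)⁻¹ / (2*(K:ℝ)) := by
  have hMr : (0:ℝ) < Mr K := Mr_pos hK1
  have hM2K : (Mr K) = 2*(K:ℝ) := by rw [Mr]; push_cast; ring
  rw [pow_succ, hM2K]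
  have hKr : (0:ℝ) < (K:ℝ) := by exact_mod_cast (by omega : 0 < K)
  field_simp

lemma sum_lb_eq (hK : 3 ≤ K) (n : ℕ) (P : ℕ) :
    ∑ i ∈ Finset.range (2*K), (1 - (rho K)^(wstep K P (i:ℤ))) * ((Mr K)^(n+1))⁻¹
      = (1 - (rho K)^P) * ((Mr K)^n)⁻¹ := by
  have hK1 : 1 ≤ K := by omega
  rw [← Finset.sum_mul, Finset.sum_sub_distrib, Finset.sum_const, Finset.card_range,
    sum_rho_pow hK, nsmul_eq_mul, Mn_succ_inv hK1]
  have hKr : (0:ℝ) < (K:ℝ) := by exact_mod_cast (by omega : 0 < K)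
  push_cast
  field_simp

lemma sum_ub_eq (hK : 3 ≤ K) (n d : ℕ) {P : ℕ} (hP : P ≠ 0) :
    ∑ i ∈ Finset.range (2*K),
        (zeta K)^(wstep K P (i:ℤ)) * (cc K)^d * ((Mr K)^(n+1))⁻¹
      = (zeta K)^P * (cc K)^(d+1) * ((Mr K)^n)⁻¹ := by
  have hK1 : 1 ≤ K := by omega
  have e : ∑ i ∈ Finset.range (2*K),
      (zeta K)^(wstep K P (i:ℤ)) * (cc K)^d * ((Mr K)^(n+1))⁻¹
      = (∑ i ∈ Finset.range (2*K), (zeta K)^(wstep K P (i:ℤ)))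
          * ((cc K)^d * ((Mr K)^(n+1))⁻¹) := by
    rw [Finset.sum_mul]
    apply Finset.sum_congr rfl
    intro i _
    ring
  rw [e, sum_zeta_pow hK hP, Mn_succ_inv hK1]
  have hKr : (0:ℝ) < (K:ℝ) := by exact_mod_cast (by omega : 0 < K)
  rw [pow_succ]
  field_simp

/-- Lower bound: the density of survivors after `d` more generations is at least `1 - ρ^Y`. -/
lemma nu_lb (hK : 3 ≤ K) (y₀ : ℕ) : ∀ (d n : ℕ) (j : ℤ),
    (1 - (rho K)^(Y K y₀ n j)) * ((Mr K)^n)⁻¹ ≤ nu K y₀ (n+d) n j := by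
  have hK1 : 1 ≤ K := by omega
  intro d
  induction d with
  | zero =>
    intro n j
    rw [Nat.add_zero, nu_base hK1]
    by_cases h : Y K y₀ n j = 0
    · rw [if_pos h, h]; simp
    · rw [if_neg h]
      have h1 : (rho K)^(Y K y₀ n j) ≥ 0 := pow_nonneg (rho_nonneg hK) _
      have h2 : (0:ℝ) < ((Mr K)^n)⁻¹ := by
        have := Mr_pos hK1; positivity
      nlinarith
  | succ d ih =>
    intro n j
    have hstep : n + (d+1) = (n+1) + d := by omega
    rw [hstep, nu_children hK1]
    have hchild : ∀ i ∈ Finset.range (2*K),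
        (1 - (rho K)^(wstep K (Y K y₀ n j) (i:ℤ))) * ((Mr K)^(n+1))⁻¹
          ≤ nu K y₀ ((n+1)+d) (n+1) ((2*K:ℤ) * j + i) := by
      intro i hi
      have h := ih (n+1) ((2*K:ℤ) * j + i)
      rw [← Y_child_eq hK1 y₀ n j (Finset.mem_range.1 hi)]
      exact h
    calc (1 - (rho K)^(Y K y₀ n j)) * ((Mr K)^n)⁻¹
        = ∑ i ∈ Finset.range (2*K),
            (1 - (rho K)^(wstep K (Y K y₀ n j) (i:ℤ))) * ((Mr K)^(n+1))⁻¹ :=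
          (sum_lb_eq hK n _).symm
      _ ≤ _ := Finset.sum_le_sum hchild

/-- Upper bound with the contraction term. -/
lemma nu_ub (hK : 3 ≤ K) (y₀ : ℕ) : ∀ (d n : ℕ) (j : ℤ),
    nu K y₀ (n+d) n j ≤ (1 - (rho K)^(Y K y₀ n j)) * ((Mr K)^n)⁻¹
      + (zeta K)^(Y K y₀ n j) * (cc K)^d * ((Mr K)^n)⁻¹ := by
  have hK1 : 1 ≤ K := by omega
  intro d
  induction d with
  | zero =>
    intro n j
    rw [Nat.add_zero, nu_base hK1]
    have h2 : (0:ℝ) < ((Mr K)^n)⁻¹ := by have := Mr_pos hK1; positivity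
    by_cases h : Y K y₀ n j = 0
    · rw [if_pos h, h]
      simp only [pow_zero]
      nlinarith
    · rw [if_neg h, pow_zero]
      have hrz : (rho K)^(Y K y₀ n j) ≤ (zeta K)^(Y K y₀ n j) :=
        pow_le_pow_left₀ (rho_nonneg hK) (rho_lt_zeta hK).le _
      nlinarith
  | succ d ih =>
    intro n j
    by_cases h0 : Y K y₀ n j = 0
    · rw [nu_absorbed hK1 y₀ h0]
      have h2 : (0:ℝ) < ((Mr K)^n)⁻¹ := by have := Mr_pos hK1; positivity
      rw [h0]
      simp only [pow_zero]
      nlinarith [pow_nonneg (cc_pos hK).le (d+1)]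
    · have hstep : n + (d+1) = (n+1) + d := by omega
      rw [hstep, nu_children hK1]
      have hchild : ∀ i ∈ Finset.range (2*K),
          nu K y₀ ((n+1)+d) (n+1) ((2*K:ℤ) * j + i)
            ≤ (1 - (rho K)^(wstep K (Y K y₀ n j) (i:ℤ))) * ((Mr K)^(n+1))⁻¹
              + (zeta K)^(wstep K (Y K y₀ n j) (i:ℤ)) * (cc K)^d * ((Mr K)^(n+1))⁻¹ := by
        intro i hi
        have h := ih (n+1) ((2*K:ℤ) * j + i)
        rwa [Y_child_eq hK1 y₀ n j (Finset.mem_range.1 hi)] at h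
      calc ∑ i ∈ Finset.range (2*K), nu K y₀ ((n+1)+d) (n+1) ((2*K:ℤ) * j + i)
          ≤ ∑ i ∈ Finset.range (2*K),
            ((1 - (rho K)^(wstep K (Y K y₀ n j) (i:ℤ))) * ((Mr K)^(n+1))⁻¹
              + (zeta K)^(wstep K (Y K y₀ n j) (i:ℤ)) * (cc K)^d * ((Mr K)^(n+1))⁻¹) :=
            Finset.sum_le_sum hchild
        _ = (1 - (rho K)^(Y K y₀ n j)) * ((Mr K)^n)⁻¹
              + (zeta K)^(Y K y₀ n j) * (cc K)^(d+1) * ((Mr K)^n)⁻¹ := by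
          rw [Finset.sum_add_distrib, sum_lb_eq hK n _, sum_ub_eq hK n d h0]

/-- The exact measure of `B` in a cell. -/
lemma vol_B_cell (hK : 3 ≤ K) (y₀ n : ℕ) (j : ℤ) :
    (volume (Bset K y₀ ∩ cell K n j)).toReal
      = (1 - (rho K)^(Y K y₀ n j)) * ((Mr K)^n)⁻¹ := by
  have hK1 : 1 ≤ K := by omega
  have hIcap : ⋂ m, (Aset K y₀ m ∩ cell K n j) = Bset K y₀ ∩ cell K n j := by
    rw [Bset, iInter_inter]
  have htend : Tendsto (fun m => volume (Aset K y₀ m ∩ cell K n j)) atTop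
      (nhds (volume (Bset K y₀ ∩ cell K n j))) := by
    rw [← hIcap]
    apply tendsto_measure_iInter_atTop
    · intro m
      exact ((measurableSet_Aset hK1 m).inter (measurableSet_cell K n j)).nullMeasurableSet
    · intro m m' hmm
      exact inter_subset_inter_left _ (Aset_antitone hK1 hmm)
    · exact ⟨0, vol_inter_cell_ne_top hK1 _ _ _⟩
  have hfin : volume (Bset K y₀ ∩ cell K n j) ≠ ⊤ :=
    vol_inter_cell_ne_top hK1 _ _ _
  have htendR : Tendsto (fun m => nu K y₀ m n j) atTop
      (nhds ((volume (Bset K y₀ ∩ cell K n j)).toReal)) :=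
    (ENNReal.tendsto_toReal hfin).comp htend
  have hcomp : Tendsto (fun d : ℕ => n + d) atTop atTop := by
    simpa [Nat.add_comm] using tendsto_add_atTop_nat n
  have htendd : Tendsto (fun d => nu K y₀ (n+d) n j) atTop
      (nhds ((volume (Bset K y₀ ∩ cell K n j)).toReal)) := htendR.comp hcomp
  have hLB : (1 - (rho K)^(Y K y₀ n j)) * ((Mr K)^n)⁻¹
      ≤ (volume (Bset K y₀ ∩ cell K n j)).toReal :=
    ge_of_tendsto htendd (Eventually.of_forall fun d => nu_lb hK y₀ d n j)
  have hUBseq : Tendsto (fun d : ℕ => (1 - (rho K)^(Y K y₀ n j)) * ((Mr K)^n)⁻¹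
      + (zeta K)^(Y K y₀ n j) * (cc K)^d * ((Mr K)^n)⁻¹) atTop
      (nhds ((1 - (rho K)^(Y K y₀ n j)) * ((Mr K)^n)⁻¹)) := by
    have hcc : Tendsto (fun d : ℕ => (cc K)^d) atTop (nhds 0) :=
      tendsto_pow_atTop_nhds_zero_of_lt_one (cc_pos hK).le (cc_lt_one hK)
    have h2 : Tendsto (fun d : ℕ => (zeta K)^(Y K y₀ n j) * (cc K)^d * ((Mr K)^n)⁻¹) atTop
        (nhds 0) := by
      have := (hcc.const_mul ((zeta K)^(Y K y₀ n j))).mul_const (((Mr K)^n)⁻¹)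
      simpa using this
    simpa using (tendsto_const_nhds.add h2)
  have hUB : (volume (Bset K y₀ ∩ cell K n j)).toReal
      ≤ (1 - (rho K)^(Y K y₀ n j)) * ((Mr K)^n)⁻¹ :=
    le_of_tendsto_of_tendsto' htendd hUBseq fun d => nu_ub hK y₀ d n j
  linarith

/-! ### Interval measures -/

noncomputable def mB (K y₀ : ℕ) (u v : ℝ) : ℝ :=
  (volume (Bset K y₀ ∩ Ico u v)).toReal

lemma mB_fin (K y₀ : ℕ) (u v : ℝ) : volume (Bset K y₀ ∩ Ico u v) ≠ ⊤ := by
  apply ne_top_of_le_ne_top _ (measure_mono inter_subset_right)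
  rw [Real.volume_Ico]
  exact ENNReal.ofReal_ne_top

lemma mB_nonneg (K y₀ : ℕ) (u v : ℝ) : 0 ≤ mB K y₀ u v := ENNReal.toReal_nonneg

lemma mB_le (K y₀ : ℕ) {u v : ℝ} (h : u ≤ v) : mB K y₀ u v ≤ v - u := by
  have h1 : volume (Bset K y₀ ∩ Ico u v) ≤ volume (Ico u v) :=
    measure_mono inter_subset_right
  rw [Real.volume_Ico] at h1
  have := ENNReal.toReal_mono ENNReal.ofReal_ne_top h1
  rwa [ENNReal.toReal_ofReal (by linarith)] at this

lemma mB_split {K : ℕ} (hK1 : 1 ≤ K) (y₀ : ℕ) {u v w : ℝ} (h1 : u ≤ v) (h2 : v ≤ w) :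
    mB K y₀ u w = mB K y₀ u v + mB K y₀ v w := by
  have hsplit : Ico u w = Ico u v ∪ Ico v w := (Ico_union_Ico_eq_Ico h1 h2).symm
  have hdisj : Disjoint (Bset K y₀ ∩ Ico u v) (Bset K y₀ ∩ Ico v w) := by
    apply Disjoint.inter_left'
    apply Disjoint.inter_right'
    exact Ico_disjoint_Ico_same
  rw [mB, hsplit, inter_union_distrib_left,
    measure_union hdisj (MeasurableSet.inter (measurableSet_Bset hK1) measurableSet_Ico),
    ENNReal.toReal_add (mB_fin K y₀ u v) (mB_fin K y₀ v w)]
  rfl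

lemma mB_cell (hK : 3 ≤ K) (y₀ n : ℕ) (j : ℤ) :
    mB K y₀ ((j:ℝ)/(Mr K)^n) (((j:ℝ)+1)/(Mr K)^n)
      = (1 - (rho K)^(Y K y₀ n j)) * ((Mr K)^n)⁻¹ := by
  have := vol_B_cell hK y₀ n j
  rw [cell] at this
  exact this

/-- Sum over a run of consecutive cells. -/
lemma mB_run (hK : 3 ≤ K) (y₀ g : ℕ) (j : ℤ) : ∀ L : ℕ,
    mB K y₀ ((j:ℝ)/(Mr K)^g) (((j:ℝ)+L)/(Mr K)^g)
      = ∑ l ∈ Finset.range L, (1 - (rho K)^(Y K y₀ g (j+l))) * ((Mr K)^g)⁻¹ := by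
  have hK1 : 1 ≤ K := by omega
  have hMg : (0:ℝ) < (Mr K)^g := pow_pos (Mr_pos hK1) g
  intro L
  induction L with
  | zero =>
    simp only [Nat.cast_zero, add_zero, Finset.range_zero, Finset.sum_empty]
    rw [mB, Ico_self, inter_empty]
    simp
  | succ L ih =>
    have hL0 : (0:ℝ) ≤ (L:ℝ) := Nat.cast_nonneg L
    have h1 : (j:ℝ)/(Mr K)^g ≤ ((j:ℝ)+L)/(Mr K)^g := by
      apply div_le_div_of_nonneg_right (by linarith) hMg.le
    have h2 : ((j:ℝ)+L)/(Mr K)^g ≤ ((j:ℝ)+((L:ℝ)+1))/(Mr K)^g := by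
      apply div_le_div_of_nonneg_right (by linarith) hMg.le
    have hcast : ((L+1 : ℕ) : ℝ) = (L:ℝ) + 1 := by push_cast; ring
    rw [hcast, mB_split hK1 y₀ h1 h2, ih, Finset.sum_range_succ]
    congr 1
    have hcell := mB_cell hK y₀ g (j + (L:ℤ))
    have e1 : ((j + (L:ℤ) : ℤ) : ℝ) = (j:ℝ) + L := by push_cast; ring
    rw [e1] at hcell
    rw [show (j:ℝ) + ((L:ℝ)+1) = ((j:ℝ) + (L:ℝ)) + 1 by ring]
    exact hcell

/-! ### Power-difference and ancestor lemmas -/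

lemma one_sub_pow_le_nsmul (hK : 3 ≤ K) : ∀ k : ℕ, 1 - (rho K)^k ≤ k * (1 - rho K) := by
  intro k
  induction k with
  | zero => simp
  | succ k ih =>
    have h0 := rho_nonneg hK
    have h1 := (rho_lt_one hK).le
    have hkk : (rho K)^k ≤ 1 := pow_le_one₀ h0 h1
    rw [pow_succ]
    push_cast
    nlinarith

lemma rho_pow_diff (hK : 3 ≤ K) {a b : ℕ} {S : ℕ} (h1 : (a:ℤ) ≤ (b:ℤ) + S)
    (h2 : (b:ℤ) ≤ (a:ℤ) + S) :
    |(rho K)^a - (rho K)^b| ≤ (S:ℝ) * (1 - rho K) := by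
  have h0 := rho_nonneg hK
  have hle := (rho_lt_one hK).le
  wlog hab : a ≤ b generalizing a b
  · rw [abs_sub_comm]
    exact this h2 h1 (by omega)
  have hmono : (rho K)^b ≤ (rho K)^a := pow_le_pow_of_le_one h0 hle hab
  rw [abs_of_nonneg (by linarith)]
  have e : (rho K)^b = (rho K)^a * (rho K)^(b-a) := by
    rw [← pow_add]; congr 1; omega
  have hb : 1 - (rho K)^(b-a) ≤ (b - a : ℕ) * (1 - rho K) := one_sub_pow_le_nsmul hK _
  have hpa : (rho K)^a ≤ 1 := pow_le_one₀ h0 hle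
  have hba : ((b - a : ℕ) : ℝ) ≤ (S:ℝ) := by
    have : (b - a : ℕ) ≤ S := by omega
    exact_mod_cast this
  have h1r : 0 ≤ 1 - rho K := by linarith [rho_lt_one hK]
  calc (rho K)^a - (rho K)^b = (rho K)^a * (1 - (rho K)^(b-a)) := by rw [e]; ring
    _ ≤ 1 - (rho K)^(b-a) := by
        nlinarith [pow_le_one₀ h0 hle (n := b-a), pow_nonneg h0 a, pow_nonneg h0 (b-a)]
    _ ≤ ((b - a : ℕ) : ℝ) * (1 - rho K) := hb
    _ ≤ (S:ℝ) * (1 - rho K) := by nlinarith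

/-- Iterated parent (ancestor) index. -/
def anck (K : ℕ) : ℕ → ℤ → ℤ
  | 0, j => j
  | k+1, j => anck K k (j / (2*K : ℤ))

lemma anck_zero (K : ℕ) (j : ℤ) : anck K 0 j = j := rfl
lemma anck_succ (K k : ℕ) (j : ℤ) : anck K (k+1) j = anck K k (j / (2*K : ℤ)) := rfl

lemma Y_anc (hK : 3 ≤ K) (y₀ : ℕ) : ∀ (k n : ℕ) (j : ℤ),
    (Y K y₀ (n+k) j : ℤ) ≤ Y K y₀ n (anck K k j) + k ∧
    (Y K y₀ n (anck K k j) : ℤ) ≤ Y K y₀ (n+k) j + k := by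
  intro k
  induction k with
  | zero => intro n j; simp [anck_zero]
  | succ k ih =>
    intro n j
    have hstep : n + (k+1) = (n+k) + 1 := by omega
    have hchild := Y_child (K := K) (y₀ := y₀) (n+k) j
    have hih := ih n (j / (2*K:ℤ))
    rw [anck_succ, hstep]
    omega

lemma floor_scale_anck (hK : 1 ≤ K) (x : ℝ) (n : ℕ) : ∀ k : ℕ,
    ⌊x * (Mr K)^n⌋ = anck K k ⌊x * (Mr K)^(n+k)⌋ := by
  intro k
  induction k with
  | zero => simp [anck_zero]
  | succ k ih =>
    rw [show n + (k+1) = (n+k)+1 by omega]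
    rw [ih, floor_scale hK x (n+k)]
    clear ih
    generalize ⌊x * (Mr K)^(n+k+1)⌋ = q
    -- anck K k (q / 2K) = anck K (k+1) q
    induction k generalizing q with
    | zero => simp [anck_zero, anck_succ]
    | succ k ih2 => rw [anck_succ, anck_succ, ih2]

/-- `anck` is "Lipschitz": if `b ≤ a + d` then `anck b ≤ anck a + d` (d ≥ 0). -/
lemma ediv_lip (hK : 1 ≤ K) {a b d : ℤ} (hd : 0 ≤ d) (h : b ≤ a + d) :
    b / (2*K:ℤ) ≤ a / (2*K:ℤ) + d := by
  have h2K : (0:ℤ) < 2*K := by exact_mod_cast (by omega : 0 < 2*K)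
  calc b / (2*K:ℤ) ≤ (a + d) / (2*K:ℤ) := Int.ediv_le_ediv h2K h
    _ ≤ (a + d * (2*K:ℤ)) / (2*K:ℤ) := Int.ediv_le_ediv h2K (by nlinarith)
    _ = a / (2*K:ℤ) + d := by rw [Int.add_mul_ediv_right _ _ (by omega : (2*K:ℤ) ≠ 0)]

lemma anck_lip (hK : 1 ≤ K) (k : ℕ) : ∀ {a b d : ℤ}, 0 ≤ d → b ≤ a + d →
    anck K k b ≤ anck K k a + d := by
  induction k with
  | zero => intro a b d _ h; simpa [anck_zero] using h
  | succ k ih =>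
    intro a b d hd h
    rw [anck_succ, anck_succ]
    exact ih hd (ediv_lip hK hd h)

/-- Spread of walk values over nearby cells, 3 generations below scale `n`. -/
lemma Y_spread (hK : 3 ≤ K) (y₀ n : ℕ) {u x : ℝ}
    (h1 : x * (Mr K)^n ≤ u * (Mr K)^n + 2) (h2 : u * (Mr K)^n ≤ x * (Mr K)^n + 2) :
    (Y K y₀ (n+3) ⌊x * (Mr K)^(n+3)⌋ : ℤ) ≤ Y K y₀ (n+3) ⌊u * (Mr K)^(n+3)⌋ + 12 ∧
    (Y K y₀ (n+3) ⌊u * (Mr K)^(n+3)⌋ : ℤ) ≤ Y K y₀ (n+3) ⌊x * (Mr K)^(n+3)⌋ + 12 := by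
  have hK1 : 1 ≤ K := by omega
  have hax : ⌊x * (Mr K)^n⌋ = anck K 3 ⌊x * (Mr K)^(n+3)⌋ := floor_scale_anck hK1 x n 3
  have hau : ⌊u * (Mr K)^n⌋ = anck K 3 ⌊u * (Mr K)^(n+3)⌋ := floor_scale_anck hK1 u n 3
  have hcast2 : ((2:ℤ):ℝ) = 2 := by norm_num
  have hd1 : ⌊x * (Mr K)^n⌋ ≤ ⌊u * (Mr K)^n⌋ + 2 := by
    have : ⌊x * (Mr K)^n⌋ ≤ ⌊u * (Mr K)^n + ((2:ℤ):ℝ)⌋ :=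
      Int.floor_le_floor (by rw [hcast2]; linarith)
    rwa [Int.floor_add_intCast] at this
  have hd2 : ⌊u * (Mr K)^n⌋ ≤ ⌊x * (Mr K)^n⌋ + 2 := by
    have : ⌊u * (Mr K)^n⌋ ≤ ⌊x * (Mr K)^n + ((2:ℤ):ℝ)⌋ :=
      Int.floor_le_floor (by rw [hcast2]; linarith)
    rwa [Int.floor_add_intCast] at this
  -- walk distance at generation n between the two ancestors
  have hYnn : (Y K y₀ n ⌊x * (Mr K)^n⌋ : ℤ) ≤ Y K y₀ n ⌊u * (Mr K)^n⌋ + 4 ∧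
      (Y K y₀ n ⌊u * (Mr K)^n⌋ : ℤ) ≤ Y K y₀ n ⌊x * (Mr K)^n⌋ + 4 := by
    set a := ⌊x * (Mr K)^n⌋
    set b := ⌊u * (Mr K)^n⌋
    rcases le_total a b with hab | hab
    · have hd : b = a + (b - a).toNat := by omega
      have := Y_chain (y₀ := y₀) hK n a (b-a).toNat
      rw [← hd] at this
      omega
    · have hd : a = b + (a - b).toNat := by omega
      have := Y_chain (y₀ := y₀) hK n b (a-b).toNat
      rw [← hd] at this
      omega
  have hx3 := Y_anc hK y₀ 3 n ⌊x * (Mr K)^(n+3)⌋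
  have hu3 := Y_anc hK y₀ 3 n ⌊u * (Mr K)^(n+3)⌋
  rw [← hax] at hx3
  rw [← hau] at hu3
  omega

/-! ### The anchored interval estimate -/

lemma theta_mem (hK : 3 ≤ K) (P : ℕ) :
    0 ≤ 1 - (rho K)^P ∧ 1 - (rho K)^P ≤ 1 := by
  have h0 := rho_nonneg hK
  have h1 := (rho_lt_one hK).le
  have := pow_le_one₀ h0 h1 (n := P)
  have := pow_nonneg h0 P
  constructor <;> linarith

set_option maxHeartbeats 1000000 in
lemma EST (hK : 3 ≤ K) (y₀ g : ℕ) (js : ℤ) (S : ℕ) {α β : ℝ} (hab : α ≤ β)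
    (HY : ∀ j : ℤ, α ≤ (j:ℝ)/(Mr K)^g → ((j:ℝ)+1)/(Mr K)^g ≤ β →
        ((Y K y₀ g j : ℤ) ≤ Y K y₀ g js + S ∧ (Y K y₀ g js : ℤ) ≤ Y K y₀ g j + S)) :
    |mB K y₀ α β - (1 - (rho K)^(Y K y₀ g js)) * (β - α)|
      ≤ (S:ℝ) * (1 - rho K) * (β - α) + 2 * ((Mr K)^g)⁻¹ := by
  have hK1 : 1 ≤ K := by omega
  have hMg : (0:ℝ) < (Mr K)^g := pow_pos (Mr_pos hK1) g
  have h1r : 0 ≤ 1 - rho K := by linarith [rho_lt_one hK]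
  set θs := 1 - (rho K)^(Y K y₀ g js) with hθs
  obtain ⟨hθ0, hθ1⟩ := theta_mem hK (Y K y₀ g js)
  set j₀ := ⌊α * (Mr K)^g⌋ with hj₀
  set j₁ := ⌊β * (Mr K)^g⌋ with hj₁
  have hj₀le : (j₀ : ℝ) ≤ α * (Mr K)^g := Int.floor_le _
  have hj₀lt : α * (Mr K)^g < (j₀ : ℝ) + 1 := Int.lt_floor_add_one _
  have hj₁le : (j₁ : ℝ) ≤ β * (Mr K)^g := Int.floor_le _
  have hj₁lt : β * (Mr K)^g < (j₁ : ℝ) + 1 := Int.lt_floor_add_one _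
  have hj₀₁ : j₀ ≤ j₁ := by
    apply Int.floor_le_floor
    nlinarith
  rcases eq_or_lt_of_le hj₀₁ with heq | hlt
  · -- inside one cell
    have hsmall : β - α ≤ ((Mr K)^g)⁻¹ := by
      rw [← heq] at hj₁lt
      have : (β - α) * (Mr K)^g ≤ 1 := by nlinarith
      rw [← one_div]
      rw [le_div_iff₀ hMg]
      linarith
    have hm1 := mB_le K y₀ hab
    have hm0 := mB_nonneg K y₀ α β
    have hθab : 0 ≤ θs * (β - α) ∧ θs * (β - α) ≤ β - α := by
      constructor
      · apply mul_nonneg hθ0; linarith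
      · nlinarith
    rw [abs_le]
    constructor
    · nlinarith [mul_nonneg (mul_nonneg (Nat.cast_nonneg (α := ℝ) S) h1r) (sub_nonneg.2 hab)]
    · nlinarith [mul_nonneg (mul_nonneg (Nat.cast_nonneg (α := ℝ) S) h1r) (sub_nonneg.2 hab)]
  · -- at least one full boundary
    set p₀ := ((j₀ : ℝ) + 1) / (Mr K)^g with hp₀
    set p₁ := ((j₁ : ℝ)) / (Mr K)^g with hp₁
    have hαp₀ : α ≤ p₀ := by
      rw [hp₀, le_div_iff₀ hMg]; linarith
    have hp₀p₁ : p₀ ≤ p₁ := by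
      rw [hp₀, hp₁]
      apply div_le_div_of_nonneg_right _ hMg.le
      have : (j₀ : ℝ) + 1 ≤ (j₁ : ℝ) := by exact_mod_cast hlt
      linarith
    have hp₁β : p₁ ≤ β := by
      rw [hp₁, div_le_iff₀ hMg]; linarith
    have hℓ₁ : p₀ - α ≤ ((Mr K)^g)⁻¹ := by
      rw [hp₀]
      have : (j₀:ℝ) / (Mr K)^g ≤ α := by rw [div_le_iff₀ hMg]; linarith
      have he : ((j₀ : ℝ) + 1)/(Mr K)^g = (j₀:ℝ)/(Mr K)^g + ((Mr K)^g)⁻¹ := by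
        field_simp
      rw [he]; linarith
    have hℓ₂ : β - p₁ ≤ ((Mr K)^g)⁻¹ := by
      rw [hp₁]
      have : β ≤ ((j₁:ℝ)+1) / (Mr K)^g := by rw [le_div_iff₀ hMg]; linarith
      have he : ((j₁ : ℝ) + 1)/(Mr K)^g = (j₁:ℝ)/(Mr K)^g + ((Mr K)^g)⁻¹ := by
        field_simp
      linarith [this, he ▸ this]
    -- middle as a run of cells
    set L := (j₁ - (j₀ + 1)).toNat with hL
    have hLcast : ((j₀:ℝ) + 1) + (L:ℝ) = (j₁ : ℝ) := by
      have : ((L:ℤ):ℝ) = (j₁:ℝ) - ((j₀:ℝ)+1) := by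
        rw [hL]
        have : ((j₁ - (j₀+1)).toNat : ℤ) = j₁ - (j₀+1) := Int.toNat_of_nonneg (by omega)
        push_cast [this]
        ring
      push_cast at this ⊢
      linarith
    have hrun := mB_run hK y₀ g (j₀ + 1) L
    have hrun' : mB K y₀ p₀ p₁
        = ∑ l ∈ Finset.range L, (1 - (rho K)^(Y K y₀ g (j₀+1+l))) * ((Mr K)^g)⁻¹ := by
      rw [hp₀, hp₁, ← hLcast]
      have e : ((j₀ + 1 : ℤ) : ℝ) = (j₀:ℝ) + 1 := by push_cast; ring
      rw [← e, ← hrun]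
    -- each middle cell satisfies the spread hypothesis
    have hmid : ∀ l ∈ Finset.range L,
        |(1 - (rho K)^(Y K y₀ g (j₀+1+l))) * ((Mr K)^g)⁻¹ - θs * ((Mr K)^g)⁻¹|
          ≤ (S:ℝ) * (1 - rho K) * ((Mr K)^g)⁻¹ := by
      intro l hl
      have hlL : (l:ℤ) < (L:ℤ) := by exact_mod_cast Finset.mem_range.1 hl
      have hj : j₀ + 1 + (l:ℤ) < j₁ := by
        have : ((L:ℤ)) = j₁ - (j₀+1) := by
          rw [hL]; exact Int.toNat_of_nonneg (by omega)
        omega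
      have hcond1 : α ≤ ((j₀ + 1 + (l:ℤ) : ℤ):ℝ)/(Mr K)^g := by
        have hstep : ((j₀:ℝ) + 1) ≤ ((j₀ + 1 + (l:ℤ) : ℤ):ℝ) := by
          push_cast
          linarith [Nat.cast_nonneg (α := ℝ) l]
        have h1 : p₀ ≤ ((j₀ + 1 + (l:ℤ) : ℤ):ℝ)/(Mr K)^g := by
          rw [hp₀]
          exact div_le_div_of_nonneg_right hstep hMg.le
        linarith
      have hcond2 : (((j₀ + 1 + (l:ℤ) : ℤ):ℝ)+1)/(Mr K)^g ≤ β := by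
        have hint : j₀ + 1 + (l:ℤ) + 1 ≤ j₁ := by omega
        have hstep : ((j₀ + 1 + (l:ℤ) : ℤ):ℝ) + 1 ≤ (j₁:ℝ) := by
          have h2 : ((j₀ + 1 + (l:ℤ) + 1 : ℤ):ℝ) ≤ ((j₁ : ℤ):ℝ) := Int.cast_le.mpr hint
          push_cast at h2 ⊢
          linarith
        have h1 : (((j₀ + 1 + (l:ℤ) : ℤ):ℝ)+1)/(Mr K)^g ≤ p₁ := by
          rw [hp₁]
          exact div_le_div_of_nonneg_right hstep hMg.le
        linarith
      obtain ⟨hs1, hs2⟩ := HY (j₀ + 1 + (l:ℤ)) hcond1 hcond2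
      have hdiff := rho_pow_diff hK (S := S) (a := Y K y₀ g (j₀+1+(l:ℤ)))
        (b := Y K y₀ g js) (by omega) (by omega)
      rw [hθs]
      have e : (1 - (rho K)^(Y K y₀ g (j₀+1+(l:ℤ)))) * ((Mr K)^g)⁻¹
          - (1 - (rho K)^(Y K y₀ g js)) * ((Mr K)^g)⁻¹
          = ((rho K)^(Y K y₀ g js) - (rho K)^(Y K y₀ g (j₀+1+(l:ℤ)))) * ((Mr K)^g)⁻¹ := by
        ring
      rw [e, abs_mul, abs_of_nonneg (by positivity : (0:ℝ) ≤ ((Mr K)^g)⁻¹)]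
      apply mul_le_mul_of_nonneg_right _ (by positivity)
      rw [abs_sub_comm]
      exact hdiff
    -- assemble
    have hsplit1 : mB K y₀ α β = mB K y₀ α p₀ + mB K y₀ p₀ p₁ + mB K y₀ p₁ β := by
      rw [mB_split hK1 y₀ hαp₀ (le_trans hp₀p₁ hp₁β), mB_split hK1 y₀ hp₀p₁ hp₁β]
      ring
    have hLM : (L:ℝ) * ((Mr K)^g)⁻¹ = p₁ - p₀ := by
      rw [hp₀, hp₁]
      have : (j₁:ℝ) - ((j₀:ℝ)+1) = (L:ℝ) := by linarith [hLcast]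
      field_simp
      linarith [hLcast]
    have hmidsum : |mB K y₀ p₀ p₁ - θs * (p₁ - p₀)|
        ≤ (S:ℝ) * (1 - rho K) * (p₁ - p₀) := by
      rw [hrun', ← hLM]
      have e : θs * ((L:ℝ) * ((Mr K)^g)⁻¹) = ∑ l ∈ Finset.range L, θs * ((Mr K)^g)⁻¹ := by
        rw [Finset.sum_const, Finset.card_range, nsmul_eq_mul]
        ring
      rw [e, ← Finset.sum_sub_distrib]
      calc |∑ l ∈ Finset.range L, ((1 - (rho K)^(Y K y₀ g (j₀+1+l))) * ((Mr K)^g)⁻¹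
              - θs * ((Mr K)^g)⁻¹)|
          ≤ ∑ l ∈ Finset.range L, |(1 - (rho K)^(Y K y₀ g (j₀+1+l))) * ((Mr K)^g)⁻¹
              - θs * ((Mr K)^g)⁻¹| := Finset.abs_sum_le_sum_abs _ _
        _ ≤ ∑ l ∈ Finset.range L, (S:ℝ) * (1 - rho K) * ((Mr K)^g)⁻¹ :=
            Finset.sum_le_sum hmid
        _ = (S:ℝ) * (1 - rho K) * ((L:ℝ) * ((Mr K)^g)⁻¹) := by
            rw [Finset.sum_const, Finset.card_range, nsmul_eq_mul]; ring
    have he₁ : |mB K y₀ α p₀ - θs * (p₀ - α)| ≤ ((Mr K)^g)⁻¹ := by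
      have hm0 := mB_nonneg K y₀ α p₀
      have hm1 := mB_le K y₀ hαp₀
      have hθab : 0 ≤ θs * (p₀ - α) ∧ θs * (p₀ - α) ≤ p₀ - α := by
        constructor
        · apply mul_nonneg hθ0; linarith
        · nlinarith
      rw [abs_le]
      constructor <;> nlinarith
    have he₂ : |mB K y₀ p₁ β - θs * (β - p₁)| ≤ ((Mr K)^g)⁻¹ := by
      have hm0 := mB_nonneg K y₀ p₁ β
      have hm1 := mB_le K y₀ hp₁β
      have hθab : 0 ≤ θs * (β - p₁) ∧ θs * (β - p₁) ≤ β - p₁ := by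
        constructor
        · apply mul_nonneg hθ0; linarith
        · nlinarith
      rw [abs_le]
      constructor <;> nlinarith
    have hdecomp : mB K y₀ α β - θs * (β - α)
        = (mB K y₀ α p₀ - θs * (p₀ - α)) + (mB K y₀ p₀ p₁ - θs * (p₁ - p₀))
          + (mB K y₀ p₁ β - θs * (β - p₁)) := by
      rw [hsplit1]; ring
    have hS0 : (0:ℝ) ≤ (S:ℝ) * (1 - rho K) := by positivity
    have habs : |mB K y₀ α β - θs * (β - α)|
        ≤ |mB K y₀ α p₀ - θs * (p₀ - α)| + |mB K y₀ p₀ p₁ - θs * (p₁ - p₀)|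
          + |mB K y₀ p₁ β - θs * (β - p₁)| := by
      rw [hdecomp]
      exact abs_add_three _ _ _
    have hmono : (S:ℝ) * (1 - rho K) * (p₁ - p₀) ≤ (S:ℝ) * (1 - rho K) * (β - α) := by
      apply mul_le_mul_of_nonneg_left _ hS0
      linarith
    linarith [habs, he₁, he₂, hmidsum, hmono]

/-! ### The main doubling estimate -/

lemma Y_gen_zero (K y₀ : ℕ) (j : ℤ) : Y K y₀ 0 j = y₀ := rfl

set_option maxHeartbeats 1000000 in
/-- Main geometric estimate: `B` is additively `2`-doubling with error `50/K` per unit length. -/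
lemma main_doubling (hK : 3 ≤ K) (y₀ : ℕ) {u v : ℝ} (huv : u < v) :
    |mB K y₀ (u - (v-u)/2) (v + (v-u)/2) - 2 * mB K y₀ u v|
      ≤ (50 / (K:ℝ)) * (v - u) := by
  have hK1 : 1 ≤ K := by omega
  have hKr : (3:ℝ) ≤ (K:ℝ) := K_real hK
  have hMr : (0:ℝ) < Mr K := Mr_pos hK1
  have hMr1 : (1:ℝ) < Mr K := by
    rw [Mr]; push_cast; linarith
  set t := v - u with ht
  have ht0 : 0 < t := by rw [ht]; linarith
  -- choose the scale n : with either t*M^n ≤ 1 (and t*M^(n+1) > 1), or n = 0 and t > 1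
  have hex : ∃ m : ℕ, 1/t < (Mr K)^m := pow_unbounded_of_one_lt (1/t) hMr1
  classical
  set m₀ := Nat.find hex with hm₀
  have hfind := Nat.find_spec hex
  -- the scale
  set n : ℕ := m₀ - 1 with hn
  set g : ℕ := n + 3 with hg
  have hMg : (0:ℝ) < (Mr K)^g := pow_pos hMr g
  -- scale properties
  have hscale : (t * (Mr K)^n ≤ 1 ∧ 1/t < (Mr K)^(n+1)) ∨ (n = 0 ∧ 1 < t) := by
    rcases Nat.eq_zero_or_pos m₀ with h0 | h0
    · right
      constructor
      · omega
      · rw [hm₀] at h0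
        rw [h0] at hfind
        simp only [pow_zero] at hfind
        rw [div_lt_one ht0] at hfind
        exact hfind
    · left
      have hn1 : n + 1 = m₀ := by omega
      constructor
      · have hnot := Nat.find_min hex (m := n) (by omega)
        push_neg at hnot
        rw [le_div_iff₀ ht0] at hnot
        nlinarith [hnot]
      · rw [hn1]
        exact hfind
  -- edge-size bound
  have hedge : ((Mr K)^g)⁻¹ ≤ t / (Mr K)^2 := by
    rcases hscale with ⟨h1, h2⟩ | ⟨h1, h2⟩
    · have h3 : 1 < t * (Mr K)^(n+1) := by
        rw [div_lt_iff₀ ht0] at h2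
        nlinarith
      rw [hg]
      have e : (Mr K)^(n+3) = (Mr K)^(n+1) * (Mr K)^2 := by
        rw [← pow_add]
      rw [e, ← one_div, div_le_div_iff₀ (by positivity) (by positivity)]
      nlinarith [pow_pos hMr (n+1), pow_pos hMr 2]
    · rw [hg, h1]
      simp only [Nat.zero_add]
      have e : (Mr K)^(0+3) = (Mr K) * (Mr K)^2 := by rw [← pow_succ']
      rw [show (0+3 : ℕ) = 3 from rfl] at e
      rw [e, ← one_div, div_le_div_iff₀ (by positivity) (by positivity)]
      have hmm : (1:ℝ) ≤ (Mr K) := hMr1.le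
      have hA : (Mr K)^2 ≤ (Mr K) * (Mr K)^2 := by nlinarith [pow_pos hMr 2]
      have hB : (Mr K) * (Mr K)^2 ≤ t * ((Mr K) * (Mr K)^2) := by
        nlinarith [mul_pos hMr (pow_pos hMr 2)]
      linarith
  -- the anchor
  set js : ℤ := ⌊u * (Mr K)^g⌋ with hjs
  -- master spread hypothesis
  have master : ∀ j : ℤ, (u - t/2) ≤ (j:ℝ)/(Mr K)^g → ((j:ℝ)+1)/(Mr K)^g ≤ v + t/2 →
      ((Y K y₀ g j : ℤ) ≤ Y K y₀ g js + 12 ∧ (Y K y₀ g js : ℤ) ≤ Y K y₀ g j + 12) := by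
    intro j hj1 hj2
    set x : ℝ := (j:ℝ)/(Mr K)^g with hx
    have hfloor : ⌊x * (Mr K)^g⌋ = j := by
      rw [hx, div_mul_cancel₀ _ hMg.ne']
      exact Int.floor_intCast j
    have hxu : u - t/2 ≤ x := hj1
    have hxv : x ≤ v + t/2 := by
      have : x ≤ ((j:ℝ)+1)/(Mr K)^g := by
        rw [hx]
        apply div_le_div_of_nonneg_right (by linarith) hMg.le
      linarith
    rcases hscale with ⟨h1, _⟩ | ⟨h1, h2⟩
    · -- use Y_spread
      have hb1 : x * (Mr K)^n ≤ u * (Mr K)^n + 2 := by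
        have : (x - u) * (Mr K)^n ≤ (3/2 * t) * (Mr K)^n := by
          apply mul_le_mul_of_nonneg_right _ (pow_pos hMr n).le
          rw [ht] at *
          linarith
        nlinarith [pow_pos hMr n]
      have hb2 : u * (Mr K)^n ≤ x * (Mr K)^n + 2 := by
        have : (u - x) * (Mr K)^n ≤ (1/2 * t) * (Mr K)^n := by
          apply mul_le_mul_of_nonneg_right _ (pow_pos hMr n).le
          linarith
        nlinarith [pow_pos hMr n]
      have := Y_spread hK y₀ n hb1 hb2
      rw [← hg] at this
      rw [hfloor] at this
      rw [hjs]
      exact this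
    · -- n = 0 : all generation-0 values equal y₀
      have ha1 := Y_anc hK y₀ 3 0 j
      have ha2 := Y_anc hK y₀ 3 0 js
      rw [Y_gen_zero] at ha1 ha2
      have hg3 : g = 0 + 3 := by rw [hg, h1]
      rw [← hg3] at ha1 ha2
      omega
  -- apply EST to the three intervals
  have hub : u - t/2 ≤ u := by linarith
  have hvb : v ≤ v + t/2 := by linarith
  have huv' : u ≤ v := huv.le
  set θs := 1 - (rho K)^(Y K y₀ g js) with hθs
  have hEL := EST hK y₀ g js 12 hub (fun j hc1 hc2 => master j hc1 (by
    have : ((j:ℝ)+1)/(Mr K)^g ≤ u := hc2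
    linarith))
  have hEM := EST hK y₀ g js 12 huv' (fun j hc1 hc2 => master j (by linarith) (by linarith))
  have hER := EST hK y₀ g js 12 hvb (fun j hc1 hc2 => master j (by linarith) (by
    have : ((j:ℝ)+1)/(Mr K)^g ≤ v + t/2 := hc2
    linarith))
  -- split the doubled interval
  have hsplit : mB K y₀ (u - t/2) (v + t/2)
      = mB K y₀ (u - t/2) u + mB K y₀ u v + mB K y₀ v (v + t/2) := by
    rw [mB_split hK1 y₀ hub (le_trans huv' hvb), mB_split hK1 y₀ huv' hvb]
    ring
  have hlen1 : u - (u - t/2) = t/2 := by ring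
  have hlen2 : (v + t/2) - v = t/2 := by ring
  rw [hlen1] at hEL
  rw [hlen2] at hER
  have hdecomp : mB K y₀ (u - t/2) (v + t/2) - 2 * mB K y₀ u v
      = (mB K y₀ (u - t/2) u - θs * (t/2)) + (mB K y₀ v (v + t/2) - θs * (t/2))
        - (mB K y₀ u v - θs * (v - u)) := by
    rw [hsplit, ht]
    ring
  have h1r : 0 ≤ 1 - rho K := by linarith [rho_lt_one hK]
  have hbound : |mB K y₀ (u - t/2) (v + t/2) - 2 * mB K y₀ u v|
      ≤ (12:ℝ) * (1 - rho K) * (t/2) + 2 * ((Mr K)^g)⁻¹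
        + ((12:ℝ) * (1 - rho K) * (t/2) + 2 * ((Mr K)^g)⁻¹)
        + ((12:ℝ) * (1 - rho K) * (v - u) + 2 * ((Mr K)^g)⁻¹) := by
    rw [hdecomp]
    have habs : |(mB K y₀ (u - t/2) u - θs * (t/2)) + (mB K y₀ v (v + t/2) - θs * (t/2))
        - (mB K y₀ u v - θs * (v - u))|
        ≤ |mB K y₀ (u - t/2) u - θs * (t/2)| + |mB K y₀ v (v + t/2) - θs * (t/2)|
          + |mB K y₀ u v - θs * (v - u)| := by
      calc _ ≤ |(mB K y₀ (u - t/2) u - θs * (t/2)) + (mB K y₀ v (v + t/2) - θs * (t/2))|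
            + |mB K y₀ u v - θs * (v - u)| := abs_sub _ _
        _ ≤ _ := by
          have := abs_add_le (mB K y₀ (u - t/2) u - θs * (t/2))
            (mB K y₀ v (v + t/2) - θs * (t/2))
          linarith
    have hc12 : ((12:ℕ):ℝ) = (12:ℝ) := by norm_num
    rw [hc12] at hEL hEM hER
    linarith [hEL, hEM, hER, habs]
  -- final numeric estimate
  have hrho : 1 - rho K = 2 / ((K:ℝ)+1) := one_sub_rho hK
  have hMg2 : ((Mr K)^g)⁻¹ ≤ t / (Mr K)^2 := hedge
  have hM2 : (Mr K)^2 = 4*(K:ℝ)^2 := by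
    rw [Mr]; push_cast; ring
  have hfin : (12:ℝ) * (1 - rho K) * (t/2) + 2 * ((Mr K)^g)⁻¹
        + ((12:ℝ) * (1 - rho K) * (t/2) + 2 * ((Mr K)^g)⁻¹)
        + ((12:ℝ) * (1 - rho K) * (v - u) + 2 * ((Mr K)^g)⁻¹)
      ≤ (50 / (K:ℝ)) * t := by
    rw [hrho, show v - u = t from ht.symm]
    have h2 : 6 * ((Mr K)^g)⁻¹ ≤ 6 * (t / (Mr K)^2) := by linarith [hMg2]
    have h3 : 6 * (t / (Mr K)^2) ≤ (2/(K:ℝ)) * t := by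
      have hKpos : (0:ℝ) < (K:ℝ) := by linarith
      have e : 6 * (t / (4*(K:ℝ)^2)) = (6*t) / (4*(K:ℝ)^2) := by ring
      rw [hM2, e, div_le_iff₀ (by positivity)]
      have e2 : (2/(K:ℝ)) * t * (4*(K:ℝ)^2) = 8*(K:ℝ)*t := by
        field_simp
        ring
      rw [e2]
      nlinarith
    have h4 : 48/((K:ℝ)+1) * t ≤ (48/(K:ℝ)) * t := by
      apply mul_le_mul_of_nonneg_right _ ht0.le
      apply div_le_div_of_nonneg_left (by norm_num) (by linarith) (by linarith)
    calc (12:ℝ) * (2/((K:ℝ)+1)) * (t/2) + 2 * ((Mr K)^g)⁻¹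
        + ((12:ℝ) * (2/((K:ℝ)+1)) * (t/2) + 2 * ((Mr K)^g)⁻¹)
        + ((12:ℝ) * (2/((K:ℝ)+1)) * t + 2 * ((Mr K)^g)⁻¹)
        = 48/((K:ℝ)+1) * t + 6 * ((Mr K)^g)⁻¹ := by ring
      _ ≤ (48/(K:ℝ)) * t + 6 * (t / (Mr K)^2) := by linarith [h2, h4]
      _ ≤ (48/(K:ℝ)) * t + (2/(K:ℝ)) * t := by linarith [h3]
      _ = (50 / (K:ℝ)) * t := by ring
  linarith [hbound, hfin]

/-! ### Packaged existence of the doubling-flat set -/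

theorem core_B (δ : ℝ) (hδ : 0 < δ) :
    ∃ B : Set ℝ, MeasurableSet B ∧
      (∀ u v : ℝ, u < v →
        |(volume (B ∩ Ico (u - (v-u)/2) (v + (v-u)/2))).toReal
          - 2 * (volume (B ∩ Ico u v)).toReal| ≤ δ * (v - u)) ∧
      (∀ u v : ℝ, volume (B ∩ Ico u v) ≠ ⊤) ∧
      1/4 ≤ (volume (B ∩ Ico 0 1)).toReal ∧ (volume (B ∩ Ico 0 1)).toReal ≤ 3/4 := by
  classical
  set K : ℕ := max 3 ⌈50/δ⌉₊ with hKdef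
  have hK : 3 ≤ K := le_max_left _ _
  have hK1 : 1 ≤ K := by omega
  have hKbig : 50/δ ≤ (K:ℝ) := by
    calc 50/δ ≤ (⌈50/δ⌉₊ : ℝ) := Nat.le_ceil _
    _ ≤ (K:ℝ) := by exact_mod_cast le_max_right 3 ⌈50/δ⌉₊
  have hKpos : (0:ℝ) < K := by
    have := K_real hK; linarith
  have hδK : 50/(K:ℝ) ≤ δ := by
    rw [div_le_iff₀ hKpos]
    rw [div_le_iff₀ hδ] at hKbig
    linarith
  -- choose y₀
  have hex : ∃ y : ℕ, (rho K)^y < 3/4 :=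
    exists_pow_lt_of_lt_one (by norm_num) (rho_lt_one hK)
  set y₀ := Nat.find hex with hy₀
  have hy₀spec : (rho K)^y₀ < 3/4 := Nat.find_spec hex
  have hy₀pos : y₀ ≠ 0 := by
    intro h0
    rw [h0] at hy₀spec
    norm_num at hy₀spec
  have hy₀lb : 3/8 ≤ (rho K)^y₀ := by
    have hprev : ¬ ((rho K)^(y₀ - 1) < 3/4) := Nat.find_min hex (by omega)
    push_neg at hprev
    have hsplit : (rho K)^y₀ = (rho K) * (rho K)^(y₀-1) := by
      rw [← pow_succ']
      congr 1
      omega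
    have h12 := rho_ge_half hK
    rw [hsplit]
    nlinarith
  refine ⟨Bset K y₀, measurableSet_Bset hK1, ?_, ?_, ?_, ?_⟩
  · intro u v huv
    have := main_doubling hK y₀ huv
    have hle : (50/(K:ℝ)) * (v - u) ≤ δ * (v - u) := by
      apply mul_le_mul_of_nonneg_right hδK (by linarith)
    calc |(volume (Bset K y₀ ∩ Ico (u - (v-u)/2) (v + (v-u)/2))).toReal
          - 2 * (volume (Bset K y₀ ∩ Ico u v)).toReal|
        = |mB K y₀ (u - (v-u)/2) (v + (v-u)/2) - 2 * mB K y₀ u v| := rfl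
      _ ≤ (50/(K:ℝ)) * (v - u) := this
      _ ≤ δ * (v - u) := hle
  · intro u v
    exact mB_fin K y₀ u v
  · -- lower bound on the unit cell
    have hcell : cell K 0 0 = Ico (0:ℝ) 1 := by
      rw [cell]
      norm_num
    have := vol_B_cell hK y₀ 0 0
    rw [hcell] at this
    simp only [pow_zero, inv_one, mul_one] at this
    have hY : Y K y₀ 0 0 = y₀ := rfl
    rw [hY] at this
    rw [this]
    linarith
  · have hcell : cell K 0 0 = Ico (0:ℝ) 1 := by
      rw [cell]
      norm_num
    have := vol_B_cell hK y₀ 0 0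
    rw [hcell] at this
    simp only [pow_zero, inv_one, mul_one] at this
    have hY : Y K y₀ 0 0 = y₀ := rfl
    rw [hY] at this
    rw [this]
    have h0 := rho_nonneg hK
    have h1 := pow_nonneg h0 y₀
    linarith

/-! ### Integrals of two-valued functions -/

lemma int_two_val {B : Set ℝ} (hB : MeasurableSet B) (c : ℝ) {u v : ℝ} (huv : u ≤ v) :
    (∫ x in Ico u v, (B.indicator (fun _ => c - 1) x + 1))
      = (v - u) + (c - 1) * (volume (B ∩ Ico u v)).toReal := by
  have hlt : volume (Ico u v) < ⊤ := by
    rw [Real.volume_Ico]; exact ENNReal.ofReal_lt_top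
  rw [integral_add]
  · rw [setIntegral_indicator hB, setIntegral_const, setIntegral_const, smul_eq_mul,
      smul_eq_mul, Real.volume_real_Ico_of_le huv, inter_comm, measureReal_def]
    ring
  · exact ((integrableOn_const hlt.ne).indicator hB)
  · exact integrableOn_const hlt.ne

end S4

open S4 in
set_option maxHeartbeats 1000000 in
theorem statement4 (p : ℝ) (hp : 1 < p) :
    ∃ c : ℝ, 1 ≤ c ∧
      ∀ Q ε : ℝ, 1 < Q → 0 < ε →
        ∃ w : ℝ → ℝ, IsWeight w ∧
          (∃ a b : ℝ, 0 < a ∧ a < b ∧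
            ∀ᵐ x ∂(volume : Measure ℝ), w x = a ∨ w x = b) ∧
          Q ≤ sSup (apSet p w (fun x => w x ^ (-(1 : ℝ) / (p - 1)))) ∧
          sSup (apSet p w (fun x => w x ^ (-(1 : ℝ) / (p - 1)))) ≤ c * Q ∧
          DoublingLE w (2 + ε) ∧
          DoublingLE (fun x => w x ^ (-(1 : ℝ) / (p - 1))) (2 + ε) := by
  have h4 : (0:ℝ) < 4 := by norm_num
  have hp0 : 0 < p - 1 := by linarith
  refine ⟨(4:ℝ)^p, ?_, ?_⟩
  · calc (1:ℝ) = (4:ℝ)^(0:ℝ) := (Real.rpow_zero 4).symm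
      _ ≤ (4:ℝ)^p := Real.rpow_le_rpow_of_exponent_le (by norm_num) (by linarith)
  intro Q ε hQ hε
  set r : ℝ := (4:ℝ)^p * Q with hr
  have h4p : (0:ℝ) < (4:ℝ)^p := Real.rpow_pos_of_pos h4 p
  have h4p4 : (4:ℝ) ≤ (4:ℝ)^p := by
    calc (4:ℝ) = (4:ℝ)^(1:ℝ) := (Real.rpow_one 4).symm
      _ ≤ (4:ℝ)^p := Real.rpow_le_rpow_of_exponent_le (by norm_num) hp.le
  have hr4 : 4 ≤ r := by
    rw [hr]
    nlinarith
  have hr1 : 1 < r := by linarith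
  have hrpos : 0 < r := by linarith
  have hepneg : -(1:ℝ)/(p-1) < 0 := by
    apply div_neg_of_neg_of_pos <;> linarith
  set r' : ℝ := r ^ (-(1:ℝ)/(p-1)) with hr'def
  have hr'pos : 0 < r' := Real.rpow_pos_of_pos hrpos _
  have hr'lt1 : r' < 1 := Real.rpow_lt_one_of_one_lt_of_neg hr1 hepneg
  set δ : ℝ := ε * r' / r with hδdef
  have hδpos : 0 < δ := by rw [hδdef]; positivity
  obtain ⟨B, hBmeas, hBdbl, hBfin, hθ1, hθ2⟩ := S4.core_B δ hδpos
  set m : ℝ → ℝ → ℝ := fun u v => (volume (B ∩ Ico u v)).toReal with hmdef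
  have hm0 : ∀ u v, 0 ≤ m u v := fun u v => ENNReal.toReal_nonneg
  have hmle : ∀ u v : ℝ, u ≤ v → m u v ≤ v - u := by
    intro u v h
    have h1 : volume (B ∩ Ico u v) ≤ volume (Ico u v) := measure_mono inter_subset_right
    rw [Real.volume_Ico] at h1
    have := ENNReal.toReal_mono ENNReal.ofReal_ne_top h1
    rwa [ENNReal.toReal_ofReal (by linarith)] at this
  set w : ℝ → ℝ := fun x => B.indicator (fun _ => r - 1) x + 1 with hwdef
  have hwmem : ∀ x ∈ B, w x = r := by
    intro x hx
    rw [hwdef]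
    simp only [Set.indicator_of_mem hx]
    ring
  have hwnot : ∀ x ∉ B, w x = 1 := by
    intro x hx
    rw [hwdef]
    simp only [Set.indicator_of_notMem hx]
    ring
  have hσfun : (fun x => w x ^ (-(1 : ℝ) / (p - 1)))
      = (fun x => B.indicator (fun _ => r' - 1) x + 1) := by
    funext x
    by_cases hx : x ∈ B
    · rw [hwmem x hx, Set.indicator_of_mem hx, ← hr'def]
      ring
    · rw [hwnot x hx, Set.indicator_of_notMem hx, Real.one_rpow]
      ring
  have hIw : ∀ u v : ℝ, u ≤ v → (∫ x in Ico u v, w x) = (v - u) + (r - 1) * m u v := by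
    intro u v h
    rw [hwdef, hmdef]
    exact int_two_val hBmeas r h
  have hIσ : ∀ u v : ℝ, u ≤ v →
      (∫ x in Ico u v, (B.indicator (fun _ => r' - 1) x + 1)) = (v - u) + (r' - 1) * m u v := by
    intro u v h
    rw [hmdef]
    exact int_two_val hBmeas r' h
  -- average formulas
  have havgw : ∀ u v : ℝ, u < v → avgOn w u v = 1 + (r - 1) * (m u v / (v - u)) := by
    intro u v h
    have h0 : v - u ≠ 0 := by linarith
    rw [avgOn, hIw u v h.le]
    field_simp
  have havgσ : ∀ u v : ℝ, u < v →
      avgOn (fun x => B.indicator (fun _ => r' - 1) x + 1) u v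
        = 1 + (r' - 1) * (m u v / (v - u)) := by
    intro u v h
    have h0 : v - u ≠ 0 := by linarith
    rw [avgOn, hIσ u v h.le]
    field_simp
  -- bounds on fractions
  have hfrac : ∀ u v : ℝ, u < v → 0 ≤ m u v / (v - u) ∧ m u v / (v - u) ≤ 1 := by
    intro u v h
    constructor
    · apply div_nonneg (hm0 u v); linarith
    · rw [div_le_one (by linarith)]
      exact hmle u v h.le
  -- elementwise upper bound on apSet
  have hub : ∀ c ∈ apSet p w (fun x => w x ^ (-(1 : ℝ) / (p - 1))), c ≤ r := by
    rintro c ⟨a, b, hab, rfl⟩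
    rw [hσfun]
    obtain ⟨hq0, hq1⟩ := hfrac a b hab
    rw [havgw a b hab, havgσ a b hab]
    set q := m a b / (b - a)
    have hw1 : 1 + (r - 1) * q ≤ r := by nlinarith
    have hw0 : 0 ≤ 1 + (r - 1) * q := by nlinarith
    have hσ1 : 1 + (r' - 1) * q ≤ 1 := by nlinarith
    have hσ0 : 0 ≤ 1 + (r' - 1) * q := by nlinarith
    have hpow : (1 + (r' - 1) * q) ^ (p - 1) ≤ 1 :=
      Real.rpow_le_one hσ0 hσ1 (by linarith)
    have hpow0 : 0 ≤ (1 + (r' - 1) * q) ^ (p - 1) := Real.rpow_nonneg hσ0 _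
    calc (1 + (r - 1) * q) * (1 + (r' - 1) * q) ^ (p - 1)
        ≤ r * 1 := by nlinarith
      _ = r := by ring
  have hbdd : BddAbove (apSet p w (fun x => w x ^ (-(1 : ℝ) / (p - 1)))) := ⟨r, hub⟩
  -- the distinguished element at (0,1)
  have h01 : (0:ℝ) < 1 := by norm_num
  have hmem : avgOn w 0 1 * (avgOn (fun x => w x ^ (-(1 : ℝ) / (p - 1))) 0 1) ^ (p-1)
      ∈ apSet p w (fun x => w x ^ (-(1 : ℝ) / (p - 1))) := ⟨0, 1, h01, rfl⟩
  have hθ1' : 1/4 ≤ m 0 1 := hθ1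
  have hθ2' : m 0 1 ≤ 3/4 := hθ2
  have hQle : Q ≤ avgOn w 0 1 * (avgOn (fun x => w x ^ (-(1 : ℝ) / (p - 1))) 0 1) ^ (p-1) := by
    rw [hσfun, havgw 0 1 h01, havgσ 0 1 h01]
    have he1 : m 0 1 / (1 - 0) = m 0 1 := by norm_num
    rw [he1]
    have hA : r/4 ≤ 1 + (r - 1) * m 0 1 := by nlinarith
    have hB : (1:ℝ)/4 ≤ 1 + (r' - 1) * m 0 1 := by nlinarith
    have hB0 : (0:ℝ) ≤ 1 + (r' - 1) * m 0 1 := by linarith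
    have hpow : ((1:ℝ)/4) ^ (p-1) ≤ (1 + (r' - 1) * m 0 1) ^ (p-1) :=
      Real.rpow_le_rpow (by norm_num) hB (by linarith)
    have hpow0 : (0:ℝ) < ((1:ℝ)/4) ^ (p-1) := Real.rpow_pos_of_pos (by norm_num) _
    have hkey : (r/4) * ((1:ℝ)/4) ^ (p-1) = Q := by
      have e1 : ((1:ℝ)/4) ^ (p-1) = ((4:ℝ) ^ (p-1))⁻¹ := by
        rw [one_div, Real.inv_rpow (by norm_num : (0:ℝ) ≤ 4)]
      have e2 : (4:ℝ)^(p-1) * 4 = (4:ℝ)^p := by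
        calc (4:ℝ)^(p-1) * 4 = (4:ℝ)^(p-1) * (4:ℝ)^(1:ℝ) := by rw [Real.rpow_one]
          _ = (4:ℝ)^(p-1+1) := (Real.rpow_add h4 _ _).symm
          _ = (4:ℝ)^p := by norm_num
      rw [e1, hr, ← e2]
      have h4p1 : (0:ℝ) < (4:ℝ)^(p-1) := Real.rpow_pos_of_pos h4 _
      field_simp
    calc Q = (r/4) * ((1:ℝ)/4) ^ (p-1) := hkey.symm
      _ ≤ (1 + (r - 1) * m 0 1) * (1 + (r' - 1) * m 0 1) ^ (p-1) := by
        apply mul_le_mul hA hpow hpow0.le (by linarith)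
  -- the doubling inequality helpers
  have hδr : δ * (r - 1) ≤ ε := by
    have k1 : r' * (r - 1) ≤ r := by nlinarith
    rw [hδdef, div_mul_eq_mul_div, div_le_iff₀ hrpos]
    calc ε * r' * (r-1) = ε * (r' * (r-1)) := by ring
      _ ≤ ε * r := by nlinarith
  have hδr' : δ ≤ ε * r' := by
    rw [hδdef, div_le_iff₀ hrpos]
    nlinarith [mul_pos hε hr'pos]
  refine ⟨w, ⟨?_, ?_, ?_⟩, ⟨1, r, by norm_num, hr1, ?_⟩, ?_, ?_, ?_, ?_⟩
  · -- measurable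
    rw [hwdef]
    exact (measurable_const.indicator hBmeas).add measurable_const
  · -- locally integrable
    rw [locallyIntegrable_iff]
    intro k hk
    apply MeasureTheory.Measure.integrableOn_of_bounded (M := r) hk.measure_lt_top.ne
      ((((measurable_const.indicator hBmeas).add measurable_const)).aestronglyMeasurable)
    · apply ae_of_all
      intro x
      by_cases hx : x ∈ B
      · simp only [Pi.add_apply]
        rw [Set.indicator_of_mem hx]
        have e : r - 1 + 1 = r := by ring
        rw [e, Real.norm_eq_abs, abs_of_pos hrpos]
      · simp only [Pi.add_apply]
        rw [Set.indicator_of_notMem hx]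
        have e : (0:ℝ) + 1 = 1 := by ring
        rw [e, Real.norm_eq_abs, abs_of_pos one_pos]
        linarith
  · -- positivity a.e.
    apply ae_of_all
    intro x
    by_cases hx : x ∈ B
    · rw [hwmem x hx]; linarith
    · rw [hwnot x hx]; norm_num
  · -- two values (a = 1, b = r)
    apply ae_of_all
    intro x
    by_cases hx : x ∈ B
    · right; exact hwmem x hx
    · left; exact hwnot x hx
  · -- Q ≤ sSup
    exact le_trans hQle (le_csSup hbdd hmem)
  · -- sSup ≤ 4^p * Q
    apply Real.sSup_le
    · intro c hc
      calc c ≤ r := hub c hc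
        _ = (4:ℝ)^p * Q := hr
    · positivity
  · -- doubling for w
    intro a b hab
    have h2 : a - (b-a)/2 ≤ b + (b-a)/2 := by linarith
    rw [hIw a b hab.le, hIw _ _ h2]
    have hdbl : |m (a - (b-a)/2) (b + (b-a)/2) - 2 * m a b| ≤ δ * (b - a) := hBdbl a b hab
    have habs := (abs_le.1 hdbl).2
    have hm1 := hm0 a b
    have hm2 := hm0 (a - (b-a)/2) (b + (b-a)/2)
    set m₁ := m a b
    set m₂ := m (a - (b-a)/2) (b + (b-a)/2)
    have hmul : (r - 1) * m₂ ≤ (r - 1) * (2 * m₁ + δ * (b - a)) := by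
      apply mul_le_mul_of_nonneg_left _ (by linarith)
      linarith
    have hmul2 : (r - 1) * (δ * (b - a)) ≤ ε * (b - a) := by
      have := mul_le_mul_of_nonneg_right hδr (by linarith : (0:ℝ) ≤ b - a)
      nlinarith
    nlinarith [mul_nonneg (mul_nonneg hε.le (by linarith : (0:ℝ) ≤ r - 1)) hm1]
  · -- doubling for σ
    rw [hσfun]
    intro a b hab
    have h2 : a - (b-a)/2 ≤ b + (b-a)/2 := by linarith
    rw [hIσ a b hab.le, hIσ _ _ h2]
    have hdbl : |m (a - (b-a)/2) (b + (b-a)/2) - 2 * m a b| ≤ δ * (b - a) := hBdbl a b hab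
    have habs := (abs_le.1 hdbl).1
    have hm1 := hm0 a b
    have hm1le := hmle a b hab.le
    have hm2 := hm0 (a - (b-a)/2) (b + (b-a)/2)
    set m₁ := m a b
    set m₂ := m (a - (b-a)/2) (b + (b-a)/2)
    -- m₂ ≥ 2 m₁ - δ (b-a); need (1 - r')((2+ε) m₁ - m₂) ≤ ε (b-a)
    have hr'1 : 0 ≤ 1 - r' := by linarith
    have key : (1 - r') * ((2 + ε) * m₁ - m₂) ≤ ε * (b - a) := by
      have h3 : (2 + ε) * m₁ - m₂ ≤ ε * m₁ + δ * (b - a) := by linarith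
      have h4' : (1 - r') * ((2 + ε) * m₁ - m₂) ≤ (1 - r') * (ε * m₁ + δ * (b - a)) :=
        mul_le_mul_of_nonneg_left h3 hr'1
      have h5 : (1 - r') * (ε * m₁ + δ * (b - a)) ≤ ε * (b - a) := by
        have h6 : δ * (b - a) ≤ ε * r' * (b - a) :=
          mul_le_mul_of_nonneg_right hδr' (by linarith)
        have hba : (0:ℝ) ≤ b - a := by linarith
        have hA : ε * m₁ ≤ ε * (b - a) := by nlinarith
        have hC := mul_le_mul_of_nonneg_left (add_le_add hA h6) hr'1
        have hD : (1 - r') * (ε * (b - a) + ε * r' * (b - a)) ≤ ε * (b - a) := by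
          nlinarith [mul_nonneg (mul_nonneg hε.le hba) (sq_nonneg r')]
        linarith
      linarith
    nlinarith [key]
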